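/- Let Φ be a natural transformation from the geometric realization functor |·| : sSet → Top (from simplicial sets to topological spaces) to itself, i.e., a natural family of continuous maps Φ_X : |X| → |X| for all simplicial sets X. Then Φ is naturally homotopic to the identity: there exists, for every simplicial set X, a homotopy H_X : |X| × [0,1] → |X| with H_X(·, 0) = Φ_X and H_X(·, 1) = id_{|X|}, and these homotopies are natural in X in the sense that for every map of simplicial sets f : X → Y and every s ∈ [0,1], one has |f| ∘ H_X(·, s) = H_Y(·, s) ∘ |f|. -/

import Mathlib

open CategoryTheory unitInterval

noncomputable section

namespace NatHomotopyAux

open SimplexCategory NNReal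


/-- `s : I` as an element of `ℝ≥0`. -/
def iN (s : I) : ℝ≥0 := ⟨s.1, s.2.1⟩

/-- `1 - s` as an element of `ℝ≥0`. -/
def iN' (s : I) : ℝ≥0 := ⟨1 - s.1, by linarith [s.2.2]⟩

lemma continuous_iN : Continuous iN :=
  Continuous.subtype_mk continuous_subtype_val _

lemma continuous_iN' : Continuous iN' :=
  Continuous.subtype_mk (by fun_prop) _

lemma iN'_add_iN (s : I) : iN' s + iN s = 1 := by
  ext; show (1 - (s : ℝ)) + s = 1; ring

@[simp] lemma iN_zero : iN 0 = 0 := by ext; simp [iN]; rfl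
@[simp] lemma iN_one : iN 1 = 1 := by ext; simp [iN]; rfl
@[simp] lemma iN'_zero : iN' 0 = 1 := by ext; simp [iN']; rfl
@[simp] lemma iN'_one : iN' 1 = 0 := by ext; simp [iN']; rfl

/-- Convex combination of two points of the topological simplex. -/
abbrev T (x : SimplexCategory) := _root_.stdSimplex ℝ (Fin (x.len + 1))

def conv {x : SimplexCategory} (s : I) (a b : T x) : T x :=
  ⟨fun i => (iN' s : ℝ) * a i + (iN s : ℝ) * b i, by
    refine ⟨fun i => ?_, ?_⟩
    · have := a.2.1 i; have := b.2.1 i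
      positivity
    have ha : ∑ i, a.1 i = 1 := a.2.2
    have hb : ∑ i, b.1 i = 1 := b.2.2
    show ∑ i, ((iN' s : ℝ) * a.1 i + (iN s : ℝ) * b.1 i) = 1
    rw [Finset.sum_add_distrib, ← Finset.mul_sum, ← Finset.mul_sum, ha, hb,
      mul_one, mul_one, ← NNReal.coe_add, iN'_add_iN, NNReal.coe_one]⟩

@[simp] lemma conv_zero {x : SimplexCategory} (a b : T x) : conv 0 a b = a := by
  apply Subtype.ext; funext i; show (iN' 0 : ℝ) * a.1 i + (iN 0 : ℝ) * b.1 i = a.1 i; simp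

@[simp] lemma conv_one {x : SimplexCategory} (a b : T x) : conv 1 a b = b := by
  apply Subtype.ext; funext i; show (iN' 1 : ℝ) * a.1 i + (iN 1 : ℝ) * b.1 i = b.1 i; simp

open Classical in
lemma toTopMap_conv {x y : SimplexCategory} (f : x ⟶ y) (s : I) (a b : T x) :
    _root_.stdSimplex.map f (conv s a b)
      = conv s (_root_.stdSimplex.map f a) (_root_.stdSimplex.map f b) := by
  apply _root_.stdSimplex.ext; funext i
  show (_root_.stdSimplex.map f (conv s a b)) i = (iN' s : ℝ) * (_root_.stdSimplex.map f a) i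
    + (iN s : ℝ) * (_root_.stdSimplex.map f b) i
  simp only [_root_.stdSimplex.map_coe, FunOnFinite.linearMap_apply_apply]
  show ∑ j ∈ Finset.univ.filter (fun j => f j = i), ((iN' s : ℝ) * a j + (iN s : ℝ) * b j) = _
  rw [Finset.sum_add_distrib, Finset.mul_sum, Finset.mul_sum]

lemma continuous_conv {x : SimplexCategory} {A : Type*} [TopologicalSpace A]
    {f g : A → T x} (hf : Continuous f) (hg : Continuous g) :
    Continuous fun p : A × I => conv p.2 (f p.1) (g p.1) := by
  refine Continuous.subtype_mk (continuous_pi fun i => ?_) _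
  exact (((NNReal.continuous_coe.comp continuous_iN').comp continuous_snd).mul
      ((continuous_apply i).comp ((continuous_subtype_val.comp hf).comp continuous_fst))).add
    (((NNReal.continuous_coe.comp continuous_iN).comp continuous_snd).mul
      ((continuous_apply i).comp ((continuous_subtype_val.comp hg).comp continuous_fst)))

/-- The unit of the Kan extension defining `SSet.toTop`. -/
abbrev U : SimplexCategory.toTop ⟶ SSet.stdSimplex ⋙ SSet.toTop :=
  SSet.toTopSimplex.inv

instance : SSet.toTop.IsLeftKanExtension U :=
  inferInstanceAs (SSet.toTop.IsLeftKanExtension SSet.toTopSimplex.inv)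

instance : IsIso U :=
  inferInstanceAs (IsIso SSet.toTopSimplex.inv)

/-- The "path space" functor `X ↦ C(I, |X|)`. -/
def P : SSet ⥤ TopCat where
  obj X := TopCat.of C(I, SSet.toTop.obj X)
  map {X Y} f := TopCat.ofHom (ContinuousMap.mk
      (fun g => ContinuousMap.comp (SSet.toTop.map f).hom g)
      (ContinuousMap.continuous_postcomp _))
  map_id X := by
    ext g a
    show SSet.toTop.map (𝟙 X) (g a) = g a
    rw [SSet.toTop.map_id]
    rfl
  map_comp {X Y Z} f g := by
    ext h a
    show SSet.toTop.map (f ≫ g) (h a) = SSet.toTop.map g (SSet.toTop.map f (h a))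
    rw [SSet.toTop.map_comp]
    rfl

variable (Φ : SSet.toTop ⟶ SSet.toTop)

/-- `Φ` transported to the topological simplices. -/
def gam (n : SimplexCategory) : SimplexCategory.toTop.obj n ⟶ SimplexCategory.toTop.obj n :=
  U.app n ≫ Φ.app (SSet.stdSimplex.obj n) ≫ inv (U.app n)

lemma gam_spec (n : SimplexCategory) :
    gam Φ n ≫ U.app n = U.app n ≫ Φ.app (SSet.stdSimplex.obj n) := by
  simp [gam]; exact Category.comp_id _

lemma gam_natural {n m : SimplexCategory} (f : n ⟶ m) :
    SimplexCategory.toTop.map f ≫ gam Φ m = gam Φ n ≫ SimplexCategory.toTop.map f := by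
  have h := U.naturality f
  change _ = U.app n ≫ SSet.toTop.map (SSet.stdSimplex.map f) at h
  have h2 : SSet.toTop.map (SSet.stdSimplex.map f) ≫ inv (U.app m)
      = inv (U.app n) ≫ SimplexCategory.toTop.map f := by
    rw [IsIso.comp_inv_eq, Category.assoc, h, IsIso.inv_hom_id_assoc]
  unfold gam
  rw [← Category.assoc, h, Category.assoc,
    ← Category.assoc (SSet.toTop.map (SSet.stdSimplex.map f)), Φ.naturality (SSet.stdSimplex.map f),
    Category.assoc, h2]
  simp
  exact ((Category.assoc _ _ _).trans (congrArg _ (Category.assoc _ _ _))).symm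

/-- The straight-line homotopy on the topological simplex, as a jointly continuous map. -/
def betaFun (n : SimplexCategory) :
    C(↑(SimplexCategory.toTop.obj n) × I, ↑(SSet.toTop.obj (SSet.stdSimplex.obj n))) :=
  ContinuousMap.mk (fun p => U.app n (ULift.up (conv p.2 (gam Φ n p.1).down p.1.down)))
    ((U.app n).hom.continuous.comp (continuous_uliftUp.comp (continuous_conv
      (continuous_uliftDown.comp (gam Φ n).hom.continuous) continuous_uliftDown)))

/-- The straight-line homotopies as a natural transformation on the simplex category. -/
def beta : SimplexCategory.toTop ⟶ SSet.stdSimplex ⋙ P where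
  app n := TopCat.ofHom (betaFun Φ n).curry
  naturality {n m} f := by
    have hU := U.naturality f
    change _ = U.app n ≫ SSet.toTop.map (SSet.stdSimplex.map f) at hU
    ext p : 2
    show (betaFun Φ m).curry (SimplexCategory.toTop.map f p) = _
    ext s
    show U.app m (ULift.up (conv s (gam Φ m (SimplexCategory.toTop.map f p)).down
        (SimplexCategory.toTop.map f p).down))
      = SSet.toTop.map (SSet.stdSimplex.map f) (U.app n (ULift.up (conv s (gam Φ n p).down p.down)))
    have hU' : ∀ q, SSet.toTop.map (SSet.stdSimplex.map f) (U.app n q)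
        = U.app m (SimplexCategory.toTop.map f q) := fun q =>
      (ConcreteCategory.congr_hom hU q).symm
    refine Eq.trans ?_ (hU' _).symm
    congr 1
    have hg : gam Φ m (SimplexCategory.toTop.map f p) = SimplexCategory.toTop.map f (gam Φ n p) :=
      ConcreteCategory.congr_hom (gam_natural Φ f) p
    rw [hg]
    show ULift.up (conv s (_root_.stdSimplex.map f (gam Φ n p).down) (_root_.stdSimplex.map f p.down))
      = ULift.up (_root_.stdSimplex.map f (conv s (gam Φ n p).down p.down))
    exact congrArg ULift.up (toTopMap_conv f s _ _).symm

/-- The natural transformation `|X| ⟶ C(I, |X|)` obtained from the Kan extension property. -/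
def Hnat : SSet.toTop ⟶ P :=
  SSet.toTop.descOfIsLeftKanExtension U P (beta Φ)

lemma Hnat_fac (n : SimplexCategory) :
    U.app n ≫ (Hnat Φ).app (SSet.stdSimplex.obj n) = (beta Φ).app n :=
  SSet.toTop.descOfIsLeftKanExtension_fac_app U P (beta Φ) n

/-- Evaluation at `s : I` as a natural transformation `P ⟶ SSet.toTop`. -/
def ev (s : I) : P ⟶ SSet.toTop where
  app X := TopCat.ofHom (ContinuousMap.mk (fun g : C(I, ↑(SSet.toTop.obj X)) => g s)
    (continuous_eval_const s) :
      C(C(I, ↑(SSet.toTop.obj X)), ↑(SSet.toTop.obj X)))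
  naturality X Y f := by
    ext g : 2
    rfl

lemma Hnat_zero : Hnat Φ ≫ ev 0 = Φ := by
  apply SSet.toTop.hom_ext_of_isLeftKanExtension U
  ext n : 2
  show U.app n ≫ (Hnat Φ).app (SSet.stdSimplex.obj n) ≫ (ev 0).app (SSet.stdSimplex.obj n)
    = U.app n ≫ Φ.app (SSet.stdSimplex.obj n)
  rw [← Category.assoc, Hnat_fac, ← gam_spec]
  ext p : 2
  show ((betaFun Φ n).curry p) 0 = U.app n (gam Φ n p)
  show U.app n (ULift.up (conv 0 (gam Φ n p).down p.down)) = _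
  exact congrArg (U.app n) (congrArg ULift.up (conv_zero _ _))

lemma Hnat_one : Hnat Φ ≫ ev 1 = 𝟙 SSet.toTop := by
  apply SSet.toTop.hom_ext_of_isLeftKanExtension U
  ext n : 2
  show U.app n ≫ (Hnat Φ).app (SSet.stdSimplex.obj n) ≫ (ev 1).app (SSet.stdSimplex.obj n)
    = U.app n ≫ 𝟙 _
  rw [← Category.assoc, Hnat_fac, Category.comp_id]
  ext p : 2
  show ((betaFun Φ n).curry p) 1 = U.app n p
  show U.app n (ULift.up (conv 1 (gam Φ n p).down p.down)) = _
  exact congrArg (U.app n) (congrArg ULift.up (conv_one _ _))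

end NatHomotopyAux

end

open NatHomotopyAux in
/-- Any natural transformation `Φ` from the geometric realization functor `SSet ⥤ Top` to
itself is naturally homotopic to the identity: for each simplicial set `X` there is a
homotopy `H X : |X| × [0,1] → |X|` from `Φ.app X` to the identity, and these homotopies are
natural in `X`. -/
theorem natural_transformation_of_realization_homotopic_to_id
    (Φ : SSet.toTop ⟶ SSet.toTop) :
    ∃ H : ∀ X : SSet, C(↑(SSet.toTop.obj X) × I, ↑(SSet.toTop.obj X)),
      (∀ (X : SSet) (x : ↑(SSet.toTop.obj X)), H X (x, 0) = Φ.app X x) ∧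
      (∀ (X : SSet) (x : ↑(SSet.toTop.obj X)), H X (x, 1) = x) ∧
      (∀ {X Y : SSet} (f : X ⟶ Y) (x : ↑(SSet.toTop.obj X)) (s : I),
        SSet.toTop.map f (H X (x, s)) = H Y (SSet.toTop.map f x, s)) := by
  refine ⟨fun X => ContinuousMap.uncurry ((Hnat Φ).app X).hom, ?_, ?_, ?_⟩
  · intro X x
    have h := ConcreteCategory.congr_hom (NatTrans.congr_app (Hnat_zero Φ) X) x
    exact h
  · intro X x
    have h := ConcreteCategory.congr_hom (NatTrans.congr_app (Hnat_one Φ) X) x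
    exact h
  · intro X Y f x s
    have h := ConcreteCategory.congr_hom ((Hnat Φ).naturality f) x
    have h2 := congrFun (congrArg (fun (g : C(_,_)) => (g : _ → _)) h) s
    exact h2.symm
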